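/- Let (φ, ψ) be a minimal embedding of a probabilistic model (A, A₊, u_A) into the quantum model Q_n, and let P := φ ∘ ψ* (where ψ* is the dual map of ψ under the trace identification). Then the image under P of the cone B₊ of positive-semidefinite n×n matrices equals the set of squares of elements of the range of P: P(B₊) = {x² : x ∈ P(B)}. -/

import Mathlib

open Module
open scoped ComplexOrder

/-- A probabilistic model `(A, A₊, u_A)`: a finite-dimensional real vector space `A`,
a closed generating pointed convex cone `A₊`, and an order unit `u_A ∈ A₊`. -/
structure ProbModel (V : Type) [NormedAddCommGroup V] [NormedSpace ℝ V]
    [FiniteDimensional ℝ V] where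
  pos : Set V
  unit : V
  add_mem : ∀ x ∈ pos, ∀ y ∈ pos, x + y ∈ pos
  smul_mem : ∀ c : ℝ, 0 ≤ c → ∀ x ∈ pos, c • x ∈ pos
  pointed : ∀ x ∈ pos, -x ∈ pos → x = 0
  closed : IsClosed pos
  spanning : Submodule.span ℝ pos = ⊤
  unit_mem : unit ∈ pos
  orderUnit : ∀ v : V, ∃ t : ℝ, 0 ≤ t ∧ t • unit - v ∈ pos

/-- The dual cone `A₊* = {ω ∈ A* : ω(e) ≥ 0 for all e ∈ A₊}`. -/
def ProbModel.dualPos {V : Type} [NormedAddCommGroup V] [NormedSpace ℝ V]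
    [FiniteDimensional ℝ V] (M : ProbModel V) : Set (Dual ℝ V) :=
  {ω | ∀ e ∈ M.pos, 0 ≤ ω e}

/-- An embedding `(φ, ψ)` of a probabilistic model `M` into a probabilistic model `N`. -/
structure ModelEmbedding {V W : Type} [NormedAddCommGroup V] [NormedSpace ℝ V]
    [FiniteDimensional ℝ V] [NormedAddCommGroup W] [NormedSpace ℝ W]
    [FiniteDimensional ℝ W] (M : ProbModel V) (N : ProbModel W) where
  φ : V →ₗ[ℝ] W
  ψ : Dual ℝ V →ₗ[ℝ] Dual ℝ W
  φ_pos : ∀ a ∈ M.pos, φ a ∈ N.pos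
  ψ_pos : ∀ ω ∈ M.dualPos, ψ ω ∈ N.dualPos
  φ_unit : φ M.unit = N.unit
  pairing : ∀ (ω : Dual ℝ V) (e : V), ψ ω (φ e) = ω e

/-- An embedding `(φ, ψ)` of a probabilistic model `M` into the `n`-level quantum
model `Q_n`, whose effect space is the real vector space of `n × n` complex Hermitian
matrices with the cone of positive-semidefinite matrices and unit effect `I`; the dual
is identified with the same space via the trace pairing `(ω, e) = tr(ω·e)`. -/
structure QEmbedding {V : Type} [NormedAddCommGroup V] [NormedSpace ℝ V]
    [FiniteDimensional ℝ V] (M : ProbModel V) (n : ℕ) where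
  φ : V →ₗ[ℝ] Matrix (Fin n) (Fin n) ℂ
  ψ : Dual ℝ V →ₗ[ℝ] Matrix (Fin n) (Fin n) ℂ
  φ_herm : ∀ a : V, (φ a).IsHermitian
  ψ_herm : ∀ ω : Dual ℝ V, (ψ ω).IsHermitian
  φ_pos : ∀ a ∈ M.pos, (φ a).PosSemidef
  ψ_pos : ∀ ω ∈ M.dualPos, (ψ ω).PosSemidef
  φ_unit : φ M.unit = 1
  pairing : ∀ (ω : Dual ℝ V) (e : V), (ψ ω * φ e).trace = (ω e : ℂ)

/-- The Jordan product `x ∘ y := ½(xy + yx)` of matrices. -/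
noncomputable def jordan {n : ℕ} (x y : Matrix (Fin n) (Fin n) ℂ) : Matrix (Fin n) (Fin n) ℂ :=
  (1 / 2 : ℂ) • (x * y + y * x)


open scoped Matrix

set_option linter.unusedSectionVars false
set_option maxHeartbeats 1600000

section MatrixAux

variable {k : Type} [Fintype k] [DecidableEq k]

variable {k : Type} [Fintype k] [DecidableEq k]

open scoped MatrixOrder in
lemma Matrix.posSemidef_iff_eq_transpose_mul_self {A : Matrix k k ℂ} :
    A.PosSemidef ↔ ∃ B : Matrix k k ℂ, A = Bᴴ * B := by
  refine ⟨fun hA => ?_, ?_⟩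
  · obtain ⟨B, hB⟩ := CStarAlgebra.nonneg_iff_eq_star_mul_self.mp hA.nonneg
    exact ⟨B, hB⟩
  · rintro ⟨B, rfl⟩
    exact Matrix.posSemidef_conjTranspose_mul_self B

lemma trace_nonneg_of_psd {A : Matrix k k ℂ} (hA : A.PosSemidef) : 0 ≤ A.trace := by
  obtain ⟨B, rfl⟩ := Matrix.posSemidef_iff_eq_transpose_mul_self.mp hA
  rw [Matrix.trace]
  refine Finset.sum_nonneg fun i _ => ?_
  rw [Matrix.diag_apply, Matrix.mul_apply]
  refine Finset.sum_nonneg fun j _ => ?_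
  simpa [Matrix.conjTranspose_apply] using star_mul_self_nonneg (B j i)

lemma psd_eq_zero_of_trace {A : Matrix k k ℂ} (hA : A.PosSemidef) (h : A.trace = 0) : A = 0 := by
  obtain ⟨B, rfl⟩ := Matrix.posSemidef_iff_eq_transpose_mul_self.mp hA
  suffices hB : B = 0 by simp [hB]
  rw [Matrix.trace] at h
  have hd : ∀ i ∈ Finset.univ, (Bᴴ * B).diag i = 0 := by
    refine (Finset.sum_eq_zero_iff_of_nonneg fun i _ => ?_).mp h
    rw [Matrix.diag_apply, Matrix.mul_apply]
    refine Finset.sum_nonneg fun j _ => ?_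
    simpa [Matrix.conjTranspose_apply] using star_mul_self_nonneg (B j i)
  ext i j
  have hj := hd j (Finset.mem_univ j)
  rw [Matrix.diag_apply, Matrix.mul_apply] at hj
  have hz : ∀ l ∈ Finset.univ, star (B l j) * (B l j) = 0 := by
    refine (Finset.sum_eq_zero_iff_of_nonneg fun l _ => star_mul_self_nonneg (B l j)).mp ?_
    simpa [Matrix.conjTranspose_apply] using hj
  have hns : Complex.normSq (B i j) = 0 := by
    have h2 := (Complex.normSq_eq_conj_mul_self (z := B i j)).symm
    rw [show (starRingEnd ℂ) (B i j) = star (B i j) from rfl, hz i (Finset.mem_univ i)] at h2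
    exact_mod_cast h2.symm
  simpa using Complex.normSq_eq_zero.mp hns

lemma trace_mul_nonneg {A B : Matrix k k ℂ} (hA : A.PosSemidef) (hB : B.PosSemidef) :
    0 ≤ (A * B).trace := by
  obtain ⟨C, rfl⟩ := Matrix.posSemidef_iff_eq_transpose_mul_self.mp hA
  rw [Matrix.mul_assoc, Matrix.trace_mul_comm]
  exact trace_nonneg_of_psd (hB.mul_mul_conjTranspose_same C)

lemma mul_eq_zero_of_trace_psd {A B : Matrix k k ℂ} (hA : A.PosSemidef) (hB : B.PosSemidef)
    (h : (A * B).trace = 0) : A * B = 0 := by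
  obtain ⟨C, rfl⟩ := Matrix.posSemidef_iff_eq_transpose_mul_self.mp hA
  obtain ⟨D, rfl⟩ := Matrix.posSemidef_iff_eq_transpose_mul_self.mp hB
  rw [Matrix.mul_assoc, Matrix.trace_mul_comm] at h
  have hpsd : (C * (Dᴴ * D) * Cᴴ).PosSemidef :=
    (Matrix.posSemidef_conjTranspose_mul_self D).mul_mul_conjTranspose_same C
  have h0 : C * (Dᴴ * D) * Cᴴ = 0 := psd_eq_zero_of_trace hpsd h
  have h1 : (D * Cᴴ)ᴴ * (D * Cᴴ) = 0 := by
    rw [Matrix.conjTranspose_mul, Matrix.conjTranspose_conjTranspose]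
    calc C * Dᴴ * (D * Cᴴ) = C * (Dᴴ * D) * Cᴴ := by
          rw [Matrix.mul_assoc, Matrix.mul_assoc, Matrix.mul_assoc]
      _ = 0 := h0
  have h2 : D * Cᴴ = 0 := Matrix.conjTranspose_mul_self_eq_zero.mp h1
  have h3 : Cᴴ * C * (Dᴴ * D) = Cᴴ * (D * Cᴴ)ᴴ * D := by
    rw [Matrix.conjTranspose_mul, Matrix.conjTranspose_conjTranspose,
      Matrix.mul_assoc, Matrix.mul_assoc, Matrix.mul_assoc]
  rw [h3, h2]
  simp

lemma psd_sum {ι : Type*} (s : Finset ι) (f : ι → Matrix k k ℂ)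
    (h : ∀ i ∈ s, (f i).PosSemidef) : (∑ i ∈ s, f i).PosSemidef := by
  classical
  induction s using Finset.induction_on with
  | empty => simpa using Matrix.PosSemidef.zero
  | @insert a s' ha ih =>
    rw [Finset.sum_insert ha]
    exact (h a (Finset.mem_insert_self a s')).add (ih fun i hi => h i (Finset.mem_insert_of_mem hi))


variable {k : Type} [Fintype k] [DecidableEq k]

lemma diag_single_sum : ∑ i : k, Matrix.diagonal (Pi.single i (1:ℂ)) = 1 := by
  ext a b
  by_cases hab : a = b
  · subst hab
    simp [Matrix.sum_apply, Matrix.diagonal_apply, Pi.single_apply]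
  · simp [Matrix.sum_apply, Matrix.diagonal_apply, hab, Matrix.one_apply]

lemma diag_smul_single_sum (μ : k → ℝ) :
    ∑ i : k, μ i • Matrix.diagonal (Pi.single i (1:ℂ)) = Matrix.diagonal (fun j => (μ j : ℂ)) := by
  ext a b
  by_cases hab : a = b
  · subst hab
    simp [Matrix.sum_apply, Matrix.diagonal_apply, Pi.single_apply]
  · simp [Matrix.sum_apply, Matrix.diagonal_apply, hab]

lemma kadison_schwarz {Pl : Matrix k k ℂ →ₗ[ℝ] Matrix k k ℂ}
    (hpos : ∀ b : Matrix k k ℂ, b.PosSemidef → (Pl b).PosSemidef)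
    (hone : Pl 1 = 1) {x : Matrix k k ℂ} (hx : x.IsHermitian)
    (hherm : (Pl x).IsHermitian) :
    (Pl (x * x) - Pl x * Pl x).PosSemidef := by
  classical
  set W : Matrix k k ℂ := (hx.eigenvectorUnitary : Matrix k k ℂ) with hWdef
  have hWmem : star W * W = 1 := Matrix.mem_unitaryGroup_iff'.mp hx.eigenvectorUnitary.2
  have hWmem' : W * star W = 1 := Matrix.mem_unitaryGroup_iff.mp hx.eigenvectorUnitary.2
  set lam : k → ℝ := hx.eigenvalues with hlam
  have hspec : x = W * Matrix.diagonal ((↑) ∘ lam) * star W := hx.spectral_theorem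
  set E : k → Matrix k k ℂ := fun i => Matrix.diagonal (Pi.single i (1:ℂ)) with hE
  have hdecomp : ∀ μ : k → ℝ,
      W * Matrix.diagonal (fun j => (μ j : ℂ)) * star W = ∑ i, μ i • (W * E i * star W) := by
    intro μ
    rw [← diag_smul_single_sum μ, Finset.mul_sum, Finset.sum_mul]
    congr 1
    ext i
    rw [mul_smul_comm, smul_mul_assoc]
  have hEpsd : ∀ i, (W * E i * star W).PosSemidef := by
    intro i
    have h1 : (E i).PosSemidef := by
      refine Matrix.PosSemidef.diagonal ?_
      intro j
      by_cases hj : j = i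
      · subst hj; simp
      · simp [Pi.single_apply, hj]
    have := h1.mul_mul_conjTranspose_same W
    rwa [← Matrix.star_eq_conjTranspose] at this
  set q : k → Matrix k k ℂ := fun i => Pl (W * E i * star W) with hq
  have hqpsd : ∀ i, (q i).PosSemidef := fun i => hpos _ (hEpsd i)
  have hqsum : ∑ i, q i = 1 := by
    rw [hq, ← map_sum]
    have h2 : (∑ i, W * E i * star W) = W * (∑ i, E i) * star W := by
      rw [← Finset.sum_mul, ← Finset.mul_sum]
    rw [h2, diag_single_sum, mul_one, hWmem', hone]
  have hxd : x = ∑ i, lam i • (W * E i * star W) := by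
    rw [← hdecomp lam]
    exact hspec
  have hx2d : x * x = ∑ i, (lam i * lam i) • (W * E i * star W) := by
    rw [← hdecomp (fun i => lam i * lam i)]
    conv_lhs => rw [hspec]
    have : ((↑) ∘ lam : k → ℂ) = fun j => (lam j : ℂ) := rfl
    rw [this]
    rw [show W * Matrix.diagonal (fun j => (lam j:ℂ)) * star W * (W * Matrix.diagonal (fun j => (lam j:ℂ)) * star W)
      = W * (Matrix.diagonal (fun j => (lam j:ℂ)) * (star W * W) * Matrix.diagonal (fun j => (lam j:ℂ))) * star W by
        simp only [Matrix.mul_assoc]]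
    rw [hWmem, mul_one, Matrix.diagonal_mul_diagonal]
    push_cast
    rfl
  have hPx : Pl x = ∑ i, lam i • q i := by
    conv_lhs => rw [hxd]
    rw [map_sum]
    simp only [map_smul, hq]
  have hPx2 : Pl (x * x) = ∑ i, (lam i * lam i) • q i := by
    conv_lhs => rw [hx2d]
    rw [map_sum]
    simp only [map_smul, hq]
  set s : Matrix k k ℂ := Pl x with hs
  set c : k → Matrix k k ℂ := fun i => lam i • (1 : Matrix k k ℂ) - s with hc
  have hcherm : ∀ i, (c i)ᴴ = c i := by
    intro i
    rw [hc]
    simp only [Matrix.conjTranspose_sub, Matrix.conjTranspose_smul, star_trivial,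
      Matrix.conjTranspose_one]
    rw [hherm]
  have expand : ∀ i, c i * q i * c i
      = ((lam i * lam i) • q i - lam i • (q i * s) - lam i • (s * q i)) + s * q i * s := by
    intro i
    rw [hc]
    simp only [sub_mul, mul_sub, smul_mul_assoc, mul_smul_comm, one_mul, mul_one, smul_smul,
      smul_sub, smul_add]
    abel
  have key : ∑ i, c i * q i * c i = Pl (x * x) - s * s := by
    simp only [expand]
    rw [Finset.sum_add_distrib, Finset.sum_sub_distrib, Finset.sum_sub_distrib]
    have e1 : ∑ i, lam i • (q i * s) = (∑ i, lam i • q i) * s := by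
      rw [Finset.sum_mul]
      congr 1; ext i; rw [smul_mul_assoc]
    have e2 : ∑ i, lam i • (s * q i) = s * ∑ i, lam i • q i := by
      rw [Finset.mul_sum]
      congr 1; ext i; rw [mul_smul_comm]
    have e3 : ∑ i, s * q i * s = s * s := by
      simp only [Matrix.mul_assoc]
      rw [← Finset.mul_sum, ← Finset.sum_mul, hqsum, one_mul]
    rw [e1, e2, e3, ← hPx, hPx2]
    abel
  rw [← key]
  refine psd_sum _ _ fun i _ => ?_
  have := (hqpsd i).conjTranspose_mul_mul_same (c i)
  rwa [hcherm i] at this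


variable {k : Type} [Fintype k] [DecidableEq k]

lemma diag_comb {ι : Type*} (s : Finset ι) (c : ι → ℝ) (d : ι → k → ℂ) :
    ∑ i ∈ s, c i • Matrix.diagonal (d i) = Matrix.diagonal (fun j => ∑ i ∈ s, c i • d i j) := by
  ext a b
  by_cases hab : a = b
  · subst hab; simp [Matrix.sum_apply, Matrix.diagonal_apply]
  · simp [Matrix.sum_apply, Matrix.diagonal_apply, hab]

lemma conjPowAux (W a : Matrix k k ℂ) (d : k → ℂ) (hW1 : star W * W = 1) (hW2 : W * star W = 1)
    (ha : a = W * Matrix.diagonal d * star W) (i : ℕ) :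
    a ^ i = W * Matrix.diagonal (fun j => d j ^ i) * star W := by
  induction i with
  | zero =>
    simp only [pow_zero]
    have : Matrix.diagonal (fun j : k => (1:ℂ)) = 1 := Matrix.diagonal_one
    rw [this, Matrix.mul_one, hW2]
  | succ i ih =>
    rw [pow_succ, ih, ha]
    rw [show W * Matrix.diagonal (fun j => d j ^ i) * star W * (W * Matrix.diagonal d * star W)
        = W * (Matrix.diagonal (fun j => d j ^ i) * (star W * W) * Matrix.diagonal d) * star W by
      simp only [Matrix.mul_assoc]]
    rw [hW1, Matrix.mul_one, Matrix.diagonal_mul_diagonal]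
    have h2 : (fun j => d j ^ i * d j) = fun j => d j ^ (i + 1) := by
      funext j; rw [pow_succ]
    rw [h2]

lemma exists_poly_sqrt (a : Matrix k k ℂ) (ha : a.PosSemidef) :
    ∃ (N : ℕ) (coef : ℕ → ℝ),
      (∑ i ∈ Finset.range N, coef i • a ^ i) * (∑ i ∈ Finset.range N, coef i • a ^ i) = a := by
  classical
  have hherm := ha.1
  set W : Matrix k k ℂ := (hherm.eigenvectorUnitary : Matrix k k ℂ) with hWdef
  have hW1 : star W * W = 1 := Matrix.mem_unitaryGroup_iff'.mp hherm.eigenvectorUnitary.2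
  have hW2 : W * star W = 1 := Matrix.mem_unitaryGroup_iff.mp hherm.eigenvectorUnitary.2
  set lam : k → ℝ := hherm.eigenvalues with hlam
  have hlampos : ∀ j, 0 ≤ lam j := fun j => ha.eigenvalues_nonneg j
  have hspec : a = W * Matrix.diagonal (fun j => (lam j : ℂ)) * star W := hherm.spectral_theorem
  set s : Finset ℝ := Finset.image lam Finset.univ with hsdef
  set f : Polynomial ℝ := Lagrange.interpolate s id Real.sqrt with hfdef
  have heval : ∀ j, f.eval (lam j) = Real.sqrt (lam j) := by
    intro j
    have hmem : lam j ∈ s := Finset.mem_image_of_mem lam (Finset.mem_univ j)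
    have := Lagrange.eval_interpolate_at_node Real.sqrt (Set.injOn_id _) hmem
    exact this
  refine ⟨f.natDegree + 1, fun i => f.coeff i, ?_⟩
  set N := f.natDegree + 1
  have hy : (∑ i ∈ Finset.range N, f.coeff i • a ^ i)
      = W * Matrix.diagonal (fun j => (Real.sqrt (lam j) : ℂ)) * star W := by
    have h1 : ∀ i : ℕ, a ^ i = W * Matrix.diagonal (fun j => (lam j : ℂ) ^ i) * star W :=
      conjPowAux W a _ hW1 hW2 hspec
    calc ∑ i ∈ Finset.range N, f.coeff i • a ^ i
        = ∑ i ∈ Finset.range N, W * (f.coeff i • Matrix.diagonal (fun j => (lam j : ℂ) ^ i)) * star W := by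
          refine Finset.sum_congr rfl fun i _ => ?_
          rw [h1 i, Matrix.mul_smul, Matrix.smul_mul]
      _ = W * (∑ i ∈ Finset.range N, f.coeff i • Matrix.diagonal (fun j => (lam j : ℂ) ^ i)) * star W := by
          rw [Finset.mul_sum, Finset.sum_mul]
      _ = W * Matrix.diagonal (fun j => (Real.sqrt (lam j) : ℂ)) * star W := by
          rw [diag_comb]
          have hfun2 : (fun j => ∑ i ∈ Finset.range N, f.coeff i • ((lam j : ℂ)) ^ i)
              = fun j => ((Real.sqrt (lam j) : ℂ)) := by
            funext j
            have hterm : ∀ i ∈ Finset.range N, f.coeff i • ((lam j : ℂ)) ^ i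
                = ((f.coeff i * lam j ^ i : ℝ) : ℂ) := by
              intro i _
              rw [Complex.real_smul]
              push_cast
              ring
            rw [Finset.sum_congr rfl hterm, ← Complex.ofReal_sum]
            rw [show ∑ i ∈ Finset.range N, f.coeff i * lam j ^ i = f.eval (lam j) from
              (Polynomial.eval_eq_sum_range _).symm]
            rw [heval j]
          rw [hfun2]
  rw [hy]
  rw [show W * Matrix.diagonal (fun j => (Real.sqrt (lam j) : ℂ)) * star W
      * (W * Matrix.diagonal (fun j => (Real.sqrt (lam j) : ℂ)) * star W)
      = W * (Matrix.diagonal (fun j => (Real.sqrt (lam j) : ℂ)) * (star W * W)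
        * Matrix.diagonal (fun j => (Real.sqrt (lam j) : ℂ))) * star W by
    simp only [Matrix.mul_assoc]]
  rw [hW1, Matrix.mul_one, Matrix.diagonal_mul_diagonal, hspec]
  have hfun : (fun j => ((Real.sqrt (lam j) : ℂ)) * ((Real.sqrt (lam j) : ℂ)))
      = fun j => ((lam j : ℂ)) := by
    funext j
    rw [← Complex.ofReal_mul, Real.mul_self_sqrt (hlampos j)]
  rw [hfun]


end MatrixAux

section Sep

variable {V : Type} [NormedAddCommGroup V] [NormedSpace ℝ V] [FiniteDimensional ℝ V]

lemma probModel_zero_mem (M : ProbModel V) : (0 : V) ∈ M.pos := by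
  have := M.smul_mem 0 le_rfl M.unit M.unit_mem
  simpa using this

lemma probModel_convex (M : ProbModel V) : Convex ℝ M.pos := by
  intro x hx y hy a b ha hb _
  exact M.add_mem _ (M.smul_mem a ha x hx) _ (M.smul_mem b hb y hy)

lemma mem_pos_of_dual (M : ProbModel V) (v : V)
    (h : ∀ ω : Dual ℝ V, ω ∈ M.dualPos → 0 ≤ ω v) : v ∈ M.pos := by
  by_contra hv
  obtain ⟨f, u, hfu, hu⟩ :=
    geometric_hahn_banach_closed_point (probModel_convex M) M.closed hv
  have hupos : 0 < u := by simpa using hfu 0 (probModel_zero_mem M)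
  have hneg : ∀ e ∈ M.pos, f e ≤ 0 := by
    intro e he
    by_contra hfe
    push_neg at hfe
    have hc : 0 ≤ u / f e := le_of_lt (div_pos hupos hfe)
    have hmem := M.smul_mem (u / f e) hc e he
    have := hfu _ hmem
    rw [map_smul] at this
    simp only [smul_eq_mul] at this
    rw [div_mul_cancel₀ u (ne_of_gt hfe)] at this
    exact lt_irrefl u this
  have hdual : (-(f.toLinearMap) : Dual ℝ V) ∈ M.dualPos := by
    intro e he
    have := hneg e he
    simp only [LinearMap.neg_apply, ContinuousLinearMap.coe_coe]
    linarith
  have := h _ hdual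
  simp only [LinearMap.neg_apply, ContinuousLinearMap.coe_coe] at this
  linarith

lemma dualPos_span (M : ProbModel V) : Submodule.span ℝ M.dualPos = ⊤ := by
  refine Submodule.span_eq_top_of_ne_zero ?_
  intro z hz
  by_contra hcon
  push_neg at hcon
  have hzero : ∀ ω ∈ M.dualPos, ω z = 0 := hcon
  have h1 : z ∈ M.pos := mem_pos_of_dual M z fun ω hω => (hzero ω hω).ge
  have h2 : -z ∈ M.pos := mem_pos_of_dual M (-z) fun ω hω => by
    rw [map_neg, hzero ω hω]
    simp
  exact hz (M.pointed z h1 h2)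

end Sep

section Faithful

variable {V : Type} [NormedAddCommGroup V] [NormedSpace ℝ V] [FiniteDimensional ℝ V]

lemma faithful_aux (M : ProbModel V) (n : ℕ) (E : QEmbedding M n)
    (hmin : ∀ m < n, IsEmpty (QEmbedding M m))
    (hspan : Submodule.span ℝ M.dualPos = ⊤)
    (c : Matrix (Fin n) (Fin n) ℂ) (hc : c.PosSemidef)
    (htr : ∀ ω : Dual ℝ V, (E.ψ ω * c).trace = 0) : c = 0 := by
  classical
  by_contra hc0
  set W : Matrix (Fin n) (Fin n) ℂ := (hc.1.eigenvectorUnitary : Matrix (Fin n) (Fin n) ℂ)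
    with hWdef
  have hW1 : star W * W = 1 := Matrix.mem_unitaryGroup_iff'.mp hc.1.eigenvectorUnitary.2
  have hW2 : W * star W = 1 := Matrix.mem_unitaryGroup_iff.mp hc.1.eigenvectorUnitary.2
  set lam : Fin n → ℝ := hc.1.eigenvalues with hlam
  set Dm : Matrix (Fin n) (Fin n) ℂ := Matrix.diagonal (fun j => (lam j : ℂ)) with hDm
  have hspec : c = W * Dm * star W := hc.1.spectral_theorem
  -- some eigenvalue is nonzero
  have hex : ∃ i, lam i ≠ 0 := by
    by_contra hall
    push_neg at hall
    apply hc0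
    rw [hspec, hDm]
    have hz : (fun j : Fin n => ((lam j : ℂ))) = fun _ => 0 := by
      funext j; rw [hall j]; simp
    rw [hz]
    simp
  obtain ⟨i₀, hi₀⟩ := hex
  set S : Finset (Fin n) := Finset.univ.filter (fun i => lam i = 0) with hS
  set m : ℕ := S.card with hm
  have hmlt : m < n := by
    have : i₀ ∉ S := by simp [hS, hi₀]
    have := Finset.card_lt_univ_of_notMem this
    simpa using this
  set g : Fin m → Fin n := fun kk => ((S.orderIsoOfFin rfl kk : S) : Fin n) with hg
  have hg_inj : Function.Injective g := by
    intro a b hab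
    have := Subtype.coe_injective hab
    exact (S.orderIsoOfFin rfl).injective this
  have hgS : ∀ kk, lam (g kk) = 0 := by
    intro kk
    have : g kk ∈ S := (S.orderIsoOfFin rfl kk).2
    simpa [hS] using this
  have hSim : S = Finset.image g Finset.univ := by
    apply Finset.ext
    intro i
    simp only [Finset.mem_image, Finset.mem_univ, true_and]
    constructor
    · intro hi
      exact ⟨(S.orderIsoOfFin rfl).symm ⟨i, hi⟩,
        congrArg Subtype.val ((S.orderIsoOfFin rfl).apply_symm_apply ⟨i, hi⟩)⟩
    · rintro ⟨kk, rfl⟩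
      exact (S.orderIsoOfFin rfl kk).2
  set U : Matrix (Fin n) (Fin m) ℂ := W.submatrix id g with hU
  have hUU : Uᴴ * U = 1 := by
    ext kk ll
    have h1 : (Uᴴ * U) kk ll = (star W * W) (g kk) (g ll) := by
      simp [Matrix.mul_apply, hU, Matrix.conjTranspose_apply, Matrix.submatrix_apply,
        Matrix.star_eq_conjTranspose]
    rw [h1, hW1, Matrix.one_apply, Matrix.one_apply]
    simp [hg_inj.eq_iff]
  set q : Matrix (Fin n) (Fin n) ℂ := U * Uᴴ with hq
  have hqherm : qᴴ = q := by
    rw [hq, Matrix.conjTranspose_mul, Matrix.conjTranspose_conjTranspose]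
  -- q = W * Ed * star W
  set Ed : Matrix (Fin n) (Fin n) ℂ :=
    Matrix.diagonal (fun j => if lam j = 0 then (1:ℂ) else 0) with hEd
  have hqEd : q = W * Ed * star W := by
    ext i j
    have h1 : q i j = ∑ kk : Fin m, W i (g kk) * star (W j (g kk)) := by
      simp [hq, hU, Matrix.mul_apply, Matrix.conjTranspose_apply, Matrix.submatrix_apply]
    have h2 : (W * Ed * star W) i j = ∑ l : Fin n, W i l * Ed l l * star (W j l) := by
      rw [Matrix.mul_apply]
      refine Finset.sum_congr rfl fun l _ => ?_
      rw [Matrix.mul_diagonal]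
      simp [Matrix.star_eq_conjTranspose, Matrix.conjTranspose_apply, hEd,
        Matrix.diagonal_apply_eq]
    rw [h1, h2]
    have h3 : ∑ l : Fin n, W i l * Ed l l * star (W j l)
        = ∑ l ∈ S, W i l * star (W j l) := by
      rw [hS, Finset.sum_filter]
      refine Finset.sum_congr rfl fun l _ => ?_
      by_cases hl : lam l = 0
      · simp [hEd, Matrix.diagonal_apply_eq, hl]
      · simp [hEd, Matrix.diagonal_apply_eq, hl]
    have h4 : ∑ l ∈ S, W i l * star (W j l) = ∑ kk : Fin m, W i (g kk) * star (W j (g kk)) := by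
      rw [hSim, Finset.sum_image (fun x _ y _ hxy => hg_inj hxy)]
    rw [h3, h4]
  -- the key compression identity for dual-positive functionals
  have hkey : ∀ ω ∈ M.dualPos, q * E.ψ ω * q = E.ψ ω := by
    intro ω hω
    have hψpsd : (E.ψ ω).PosSemidef := E.ψ_pos ω hω
    have hψc : E.ψ ω * c = 0 := mul_eq_zero_of_trace_psd hψpsd hc (htr ω)
    have hcψ : c * E.ψ ω = 0 := by
      have h5 := congrArg Matrix.conjTranspose hψc
      rwa [Matrix.conjTranspose_mul, hc.1.eq, (E.ψ_herm ω).eq, Matrix.conjTranspose_zero] at h5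
    set R : Matrix (Fin n) (Fin n) ℂ := star W * E.ψ ω * W with hR
    have hWRW : W * R * star W = E.ψ ω := by
      rw [hR]
      calc W * (star W * E.ψ ω * W) * star W
          = (W * star W) * E.ψ ω * (W * star W) := by simp only [Matrix.mul_assoc]
        _ = E.ψ ω := by rw [hW2, Matrix.one_mul, Matrix.mul_one]
    have hDR : Dm * R = 0 := by
      have h5 : c * (E.ψ ω * W) = 0 := by rw [← Matrix.mul_assoc, hcψ, Matrix.zero_mul]
      rw [hspec] at h5
      have h6 : star W * (W * Dm * star W * (E.ψ ω * W)) = 0 := by rw [h5, Matrix.mul_zero]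
      calc Dm * R = (star W * W) * Dm * star W * E.ψ ω * W := by
            rw [hW1, Matrix.one_mul, hR]
            simp only [Matrix.mul_assoc]
        _ = star W * (W * Dm * star W * (E.ψ ω * W)) := by simp only [Matrix.mul_assoc]
        _ = 0 := h6
    have hRentry : ∀ a b : Fin n, lam a ≠ 0 → R a b = 0 := by
      intro a b hab
      have h5 : (Dm * R) a b = (lam a : ℂ) * R a b := by
        rw [hDm, Matrix.diagonal_mul]
      rw [hDR] at h5
      have h6 : (lam a : ℂ) ≠ 0 := by
        simpa using hab
      have := h5.symm
      rw [Matrix.zero_apply] at this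
      exact (mul_eq_zero.mp this).resolve_left h6
    have hEdR : Ed * R = R := by
      ext a b
      rw [Matrix.mul_apply]
      by_cases ha : lam a = 0
      · rw [Finset.sum_eq_single a]
        · simp [hEd, Matrix.diagonal_apply_eq, ha]
        · intro l _ hl
          simp [hEd, Matrix.diagonal_apply_ne' _ hl]
        · intro h; exact absurd (Finset.mem_univ a) h
      · rw [hRentry a b ha]
        refine Finset.sum_eq_zero fun l _ => ?_
        by_cases hla : l = a
        · subst hla; simp [hEd, Matrix.diagonal_apply_eq, ha]
        · have : Ed a l = 0 := by
            rw [hEd, Matrix.diagonal_apply_ne _ (fun h => hla h.symm)]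
          rw [this, zero_mul]
    have hqψ : q * E.ψ ω = E.ψ ω := by
      rw [hqEd, ← hWRW]
      calc W * Ed * star W * (W * R * star W)
          = W * (Ed * ((star W * W) * R)) * star W := by simp only [Matrix.mul_assoc]
        _ = W * (Ed * R) * star W := by rw [hW1, Matrix.one_mul]
        _ = W * R * star W := by rw [hEdR]
    have hψq : E.ψ ω * q = E.ψ ω := by
      have h5 := congrArg Matrix.conjTranspose hqψ
      rwa [Matrix.conjTranspose_mul, hqherm, (E.ψ_herm ω).eq] at h5
    rw [Matrix.mul_assoc, hψq, hqψ]
  -- extend to all ω by linearity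
  have hall : ∀ ω : Dual ℝ V, q * E.ψ ω * q = E.ψ ω := by
    intro ω
    have hωtop : ω ∈ Submodule.span ℝ M.dualPos := by rw [hspan]; trivial
    induction hωtop using Submodule.span_induction with
    | mem x hx => exact hkey x hx
    | zero => simp
    | add x y _ _ hx hy =>
      rw [map_add, Matrix.mul_add, Matrix.add_mul, hx, hy]
    | smul r x _ hx =>
      rw [map_smul, Matrix.mul_smul, Matrix.smul_mul, hx]
  -- build the smaller embedding
  have hφ'lin : ∀ (p : V →ₗ[ℝ] Matrix (Fin n) (Fin n) ℂ), True := fun _ => trivial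
  let φ' : V →ₗ[ℝ] Matrix (Fin m) (Fin m) ℂ :=
    { toFun := fun e => Uᴴ * E.φ e * U
      map_add' := fun x y => by
        simp only [map_add, Matrix.mul_add, Matrix.add_mul]
      map_smul' := fun r x => by
        simp only [map_smul, RingHom.id_apply, Matrix.mul_smul, Matrix.smul_mul] }
  let ψ' : Dual ℝ V →ₗ[ℝ] Matrix (Fin m) (Fin m) ℂ :=
    { toFun := fun ω => Uᴴ * E.ψ ω * U
      map_add' := fun x y => by
        simp only [map_add, Matrix.mul_add, Matrix.add_mul]
      map_smul' := fun r x => by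
        simp only [map_smul, RingHom.id_apply, Matrix.mul_smul, Matrix.smul_mul] }
  have hφ'app : ∀ e, φ' e = Uᴴ * E.φ e * U := fun _ => rfl
  have hψ'app : ∀ ω, ψ' ω = Uᴴ * E.ψ ω * U := fun _ => rfl
  refine (hmin m hmlt).false ⟨φ', ψ', ?_, ?_, ?_, ?_, ?_, ?_⟩
  · intro a
    rw [hφ'app]
    exact Matrix.isHermitian_conjTranspose_mul_mul U (E.φ_herm a)
  · intro ω
    rw [hψ'app]
    exact Matrix.isHermitian_conjTranspose_mul_mul U (E.ψ_herm ω)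
  · intro a ha
    rw [hφ'app]
    exact (E.φ_pos a ha).conjTranspose_mul_mul_same U
  · intro ω hω
    rw [hψ'app]
    exact (E.ψ_pos ω hω).conjTranspose_mul_mul_same U
  · rw [hφ'app, E.φ_unit, Matrix.mul_one, hUU]
  · intro ω e
    rw [hψ'app, hφ'app]
    have h1 : Uᴴ * E.ψ ω * U * (Uᴴ * E.φ e * U) = Uᴴ * (E.ψ ω * q * E.φ e) * U := by
      rw [hq]
      simp only [Matrix.mul_assoc]
    rw [h1]
    have h2 : (Uᴴ * (E.ψ ω * q * E.φ e) * U).trace = (U * Uᴴ * (E.ψ ω * q * E.φ e)).trace := by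
      rw [Matrix.trace_mul_cycle]
    rw [h2]
    have h3 : U * Uᴴ * (E.ψ ω * q * E.φ e) = (q * E.ψ ω * q) * E.φ e := by
      rw [← hq]
      simp only [Matrix.mul_assoc]
    rw [h3, hall ω]
    exact E.pairing ω e

end Faithful


/-- For a minimal embedding `(φ, ψ)` of a model `M` into `Q_n`, with
`ψ* : B → A` the dual map of `ψ` under the trace identification (characterized by
`ω(ψ*(b)) = tr(ψ(ω)·b)` for Hermitian `b`) and `P := φ ∘ ψ*`, the image under `P` of
the cone of positive-semidefinite matrices equals the set of squares of elements of
the range of `P`: `P(B₊) = {x² : x ∈ P(B)}`. -/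
theorem minimal_embedding_cone_of_squares {V : Type} [NormedAddCommGroup V]
    [NormedSpace ℝ V] [FiniteDimensional ℝ V] (M : ProbModel V) (n : ℕ)
    (E : QEmbedding M n)
    (hmin : ∀ m < n, IsEmpty (QEmbedding M m))
    (ψstar : Matrix (Fin n) (Fin n) ℂ →ₗ[ℝ] V)
    (hψstar : ∀ (ω : Dual ℝ V) (b : Matrix (Fin n) (Fin n) ℂ), b.IsHermitian →
      ((ω (ψstar b) : ℝ) : ℂ) = (E.ψ ω * b).trace) :
    (fun b => E.φ (ψstar b)) '' {b : Matrix (Fin n) (Fin n) ℂ | b.PosSemidef}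
      = (fun x => x * x) ''
          ((fun b => E.φ (ψstar b)) ''
            {y : Matrix (Fin n) (Fin n) ℂ | y.IsHermitian}) := by
  classical
  set P : Matrix (Fin n) (Fin n) ℂ →ₗ[ℝ] Matrix (Fin n) (Fin n) ℂ := E.φ.comp ψstar with hPdef
  have hPapp : ∀ b, E.φ (ψstar b) = P b := fun _ => rfl
  have hψφ : ∀ e : V, ψstar (E.φ e) = e := by
    intro e
    have h : ∀ ω : Dual ℝ V, ω (ψstar (E.φ e) - e) = 0 := by
      intro ω
      have h1 := hψstar ω (E.φ e) (E.φ_herm e)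
      rw [E.pairing ω e] at h1
      have h2 : ω (ψstar (E.φ e)) = ω e := by exact_mod_cast h1
      rw [map_sub, h2, sub_self]
    exact sub_eq_zero.mp ((Module.forall_dual_apply_eq_zero_iff ℝ _).mp h)
  have hφinj : Function.Injective E.φ := by
    intro a b hab
    have := congrArg ψstar hab
    rwa [hψφ, hψφ] at this
  have hPidem : ∀ b, P (P b) = P b := fun b => congrArg E.φ (hψφ (ψstar b))
  have hPherm : ∀ b, (P b).IsHermitian := fun _ => E.φ_herm _
  have hP1 : P (1 : Matrix (Fin n) (Fin n) ℂ) = 1 := by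
    have hu : ψstar (1 : Matrix (Fin n) (Fin n) ℂ) = M.unit := by
      have h : ∀ ω : Dual ℝ V, ω (ψstar 1 - M.unit) = 0 := by
        intro ω
        have h1 := hψstar ω 1 Matrix.isHermitian_one
        have h2 := E.pairing ω M.unit
        rw [E.φ_unit] at h2
        have h3 : (ω (ψstar 1) : ℂ) = (ω M.unit : ℂ) := h1.trans h2
        have h4 : ω (ψstar 1) = ω M.unit := by exact_mod_cast h3
        rw [map_sub, h4, sub_self]
      exact sub_eq_zero.mp ((Module.forall_dual_apply_eq_zero_iff ℝ _).mp h)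
    show E.φ (ψstar 1) = 1
    rw [hu, E.φ_unit]
  have hψpos : ∀ b : Matrix (Fin n) (Fin n) ℂ, b.PosSemidef → ψstar b ∈ M.pos := by
    intro b hb
    refine mem_pos_of_dual M _ fun ω hω => ?_
    have h1 := hψstar ω b hb.1
    have h2 : 0 ≤ (E.ψ ω * b).trace := trace_mul_nonneg (E.ψ_pos ω hω) hb
    rw [← h1] at h2
    exact Complex.zero_le_real.mp h2
  have hPpos : ∀ b : Matrix (Fin n) (Fin n) ℂ, b.PosSemidef → (P b).PosSemidef :=
    fun b hb => E.φ_pos _ (hψpos b hb)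
  have hfaith : ∀ c : Matrix (Fin n) (Fin n) ℂ, c.PosSemidef → P c = 0 → c = 0 := by
    intro c hcpsd hPc
    have hψc : ψstar c = 0 := by
      apply hφinj
      rw [map_zero]
      exact hPc
    refine faithful_aux M n E hmin (dualPos_span M) c hcpsd fun ω => ?_
    have h1 := (hψstar ω c hcpsd.1).symm
    rw [hψc, map_zero] at h1
    simpa using h1
  have hsq : ∀ h : Matrix (Fin n) (Fin n) ℂ, h.IsHermitian → P (P h * P h) = P h * P h := by
    intro h hh
    have hxherm : (P h).IsHermitian := hPherm h
    have hks := kadison_schwarz hPpos hP1 hxherm (by rw [hPidem h]; exact hPherm h)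
    have hdpsd : (P (P h * P h) - P h * P h).PosSemidef := by
      rwa [hPidem h] at hks
    have hPd : P (P (P h * P h) - P h * P h) = 0 := by
      rw [map_sub, hPidem (P h * P h), sub_self]
    have := hfaith _ hdpsd hPd
    have h2 : P (P h * P h) = P h * P h := by
      have := sub_eq_zero.mp this
      exact this
    exact h2
  -- the set T of images of Hermitian matrices
  have hT0 : ∃ h : Matrix (Fin n) (Fin n) ℂ, h.IsHermitian ∧ P h = 0 :=
    ⟨0, Matrix.isHermitian_zero, map_zero P⟩
  have hT1 : ∃ h : Matrix (Fin n) (Fin n) ℂ, h.IsHermitian ∧ P h = 1 :=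
    ⟨1, Matrix.isHermitian_one, hP1⟩
  have hTadd : ∀ y z : Matrix (Fin n) (Fin n) ℂ,
      (∃ h, Matrix.IsHermitian h ∧ P h = y) → (∃ h, Matrix.IsHermitian h ∧ P h = z) →
      ∃ h, Matrix.IsHermitian h ∧ P h = y + z := by
    rintro _ _ ⟨h1, hh1, rfl⟩ ⟨h2, hh2, rfl⟩
    exact ⟨h1 + h2, hh1.add hh2, map_add P h1 h2⟩
  have hTsmulherm : ∀ (r : ℝ) (h : Matrix (Fin n) (Fin n) ℂ), h.IsHermitian →
      (r • h).IsHermitian := by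
    intro r h hh
    show (r • h)ᴴ = r • h
    rw [Matrix.conjTranspose_smul, star_trivial, hh.eq]
  have hTsmul : ∀ (r : ℝ) (y : Matrix (Fin n) (Fin n) ℂ),
      (∃ h, Matrix.IsHermitian h ∧ P h = y) →
      ∃ h, Matrix.IsHermitian h ∧ P h = r • y := by
    rintro r _ ⟨h1, hh1, rfl⟩
    exact ⟨r • h1, hTsmulherm r h1 hh1, map_smul P r h1⟩
  have hTsub : ∀ y z : Matrix (Fin n) (Fin n) ℂ,
      (∃ h, Matrix.IsHermitian h ∧ P h = y) → (∃ h, Matrix.IsHermitian h ∧ P h = z) →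
      ∃ h, Matrix.IsHermitian h ∧ P h = y - z := by
    rintro _ _ ⟨h1, hh1, rfl⟩ ⟨h2, hh2, rfl⟩
    exact ⟨h1 - h2, hh1.sub hh2, map_sub P h1 h2⟩
  have hTsq : ∀ y : Matrix (Fin n) (Fin n) ℂ,
      (∃ h, Matrix.IsHermitian h ∧ P h = y) →
      ∃ h, Matrix.IsHermitian h ∧ P h = y * y := by
    rintro _ ⟨h1, hh1, rfl⟩
    have hherm : (P h1 * P h1).IsHermitian := by
      show (P h1 * P h1)ᴴ = P h1 * P h1
      rw [Matrix.conjTranspose_mul, (hPherm h1).eq]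
    exact ⟨P h1 * P h1, hherm, hsq h1 hh1⟩
  -- powers
  have hpow : ∀ (b : Matrix (Fin n) (Fin n) ℂ), b.IsHermitian → ∀ k : ℕ,
      ∃ h, Matrix.IsHermitian h ∧ P h = (P b) ^ k := by
    intro b hb k
    induction k using Nat.strong_induction_on with
    | _ k ih =>
      match k with
      | 0 => rw [pow_zero]; exact hT1
      | 1 => rw [pow_one]; exact ⟨b, hb, rfl⟩
      | (k + 2) =>
        rcases Nat.even_or_odd (k + 2) with ⟨i, hi⟩ | ⟨i, hi⟩
        · have hik : i < k + 2 := by omega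
          have hii : (P b) ^ (k + 2) = (P b) ^ i * (P b) ^ i := by
            rw [← pow_add, ← hi]
          rw [hii]
          exact hTsq _ (ih i hik)
        · -- k + 2 = 2 * i + 1, i ≥ 1
          have hi1 : 1 ≤ i := by omega
          have hikA : i < k + 2 := by omega
          have hikB : i + 1 < k + 2 := by omega
          obtain ⟨hu', huh, hup⟩ := ih i hikA
          obtain ⟨hv', hvh, hvp⟩ := ih (i + 1) hikB
          set u : Matrix (Fin n) (Fin n) ℂ := (P b) ^ i with hudef
          set v : Matrix (Fin n) (Fin n) ℂ := (P b) ^ (i + 1) with hvdef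
          have hTu : ∃ h, Matrix.IsHermitian h ∧ P h = u := ⟨hu', huh, hup⟩
          have hTv : ∃ h, Matrix.IsHermitian h ∧ P h = v := ⟨hv', hvh, hvp⟩
          have hTw : ∃ h, Matrix.IsHermitian h ∧ P h = u + v := hTadd _ _ hTu hTv
          have hTww : ∃ h, Matrix.IsHermitian h ∧ P h = (u + v) * (u + v) := hTsq _ hTw
          have hTuu : ∃ h, Matrix.IsHermitian h ∧ P h = u * u := hTsq _ hTu
          have hTvv : ∃ h, Matrix.IsHermitian h ∧ P h = v * v := hTsq _ hTv
          have hcomb : ∃ h, Matrix.IsHermitian h ∧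
              P h = ((1:ℝ)/2) • ((u + v) * (u + v) - u * u - v * v) :=
            hTsmul _ _ (hTsub _ _ (hTsub _ _ hTww hTuu) hTvv)
          have hcalc : ((1:ℝ)/2) • ((u + v) * (u + v) - u * u - v * v) = (P b) ^ (k + 2) := by
            have huv : u * v = (P b) ^ (k + 2) := by
              rw [hudef, hvdef, ← pow_add]
              congr 1
              omega
            have hvu : v * u = (P b) ^ (k + 2) := by
              rw [hudef, hvdef, ← pow_add]
              congr 1
              omega
            have hexp : (u + v) * (u + v) - u * u - v * v = u * v + v * u := by
              noncomm_ring
            rw [hexp, huv, hvu, ← two_smul ℝ ((P b) ^ (k + 2)), smul_smul]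
            norm_num
          rw [← hcalc]
          exact hcomb
  -- sums of powers
  have hsump : ∀ (b : Matrix (Fin n) (Fin n) ℂ), b.IsHermitian → ∀ (coef : ℕ → ℝ) (N : ℕ),
      ∃ h, Matrix.IsHermitian h ∧ P h = ∑ i ∈ Finset.range N, coef i • (P b) ^ i := by
    intro b hb coef N
    induction N with
    | zero => simpa using hT0
    | succ N ihN =>
      rw [Finset.sum_range_succ]
      exact hTadd _ _ ihN (hTsmul _ _ (hpow b hb N))
  -- main set equality
  apply Set.Subset.antisymm
  · rintro y ⟨b, hb, rfl⟩
    have hbpsd : b.PosSemidef := hb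
    obtain ⟨N, coef, hcoef⟩ := exists_poly_sqrt (P b) (hPpos b hbpsd)
    obtain ⟨h, hherm, hPh⟩ := hsump b hbpsd.1 coef N
    refine ⟨∑ i ∈ Finset.range N, coef i • (P b) ^ i, ⟨h, hherm, ?_⟩, ?_⟩
    · exact hPh
    · exact hcoef
  · rintro y ⟨x, ⟨h, hherm, rfl⟩, rfl⟩
    refine ⟨E.φ (ψstar h) * E.φ (ψstar h), ?_, ?_⟩
    · show (P h * P h).PosSemidef
      have hrw : (P h)ᴴ * (P h) = P h * P h := by rw [(hPherm h).eq]
      rw [← hrw]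
      exact Matrix.posSemidef_conjTranspose_mul_self _
    · show E.φ (ψstar (P h * P h)) = P h * P h
      exact hsq h hherm
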